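/- Let $c_i \ge 0$ with $\sum_{i=1}^N c_i = 1$, and let $g_1, \dots, g_N$ be measurable functions on $\mathbb{R}$ with $\|g_i\|_{L^{1,\infty}} \le 1$ for all $i$. Then $\|\sum_{i=1}^N c_i g_i\|_{L^{1,\infty}} \le C(1 + \sum_{i=1}^N c_i \log(1/c_i))$ for an absolute constant $C$. In particular, if $c_i = 1/N$ for all $i$, then $\|\frac{1}{N}\sum_i g_i\|_{L^{1,\infty}} \le C(1 + \log N)$. -/

import Mathlib

open MeasureTheory Set
open scoped ENNReal

/-- The weak-`L¹` quasinorm of a real-valued function on `ℝ`. -/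
noncomputable def weakL1 (h : ℝ → ℝ) : ℝ≥0∞ :=
  ⨆ (lam : ℝ) (_ : 0 < lam), ENNReal.ofReal lam * volume {x | lam < |h x|}

lemma sw_aux_pointwise (lam y : ℝ) (hlam : 0 < lam) :
    ∀ K : ℕ, y ≤ lam * 2 ^ K / 2 →
      y ≤ lam / 2 + ∑ k ∈ Finset.range K, (if lam * 2 ^ k / 2 < y then lam * 2 ^ k / 2 else 0) := by
  intro K
  induction K with
  | zero => intro hy; simpa using hy
  | succ K ih =>
    intro hy
    by_cases h : y ≤ lam * 2 ^ K / 2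
    · have := ih h
      have hnn : (0:ℝ) ≤ (if lam * 2 ^ K / 2 < y then lam * 2 ^ K / 2 else 0) := by
        split_ifs <;> positivity
      rw [Finset.sum_range_succ]
      linarith
    · push_neg at h
      have hsum : ∑ k ∈ Finset.range (K+1), (lam * 2 ^ k / 2)
          ≤ ∑ k ∈ Finset.range (K+1), (if lam * 2 ^ k / 2 < y then lam * 2 ^ k / 2 else 0) := by
        apply Finset.sum_le_sum
        intro k hk
        have hk' : k ≤ K := Nat.lt_succ_iff.mp (Finset.mem_range.mp hk)
        have h2 : (2:ℝ) ^ k ≤ 2 ^ K := pow_le_pow_right₀ (by norm_num) hk'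
        have : lam * 2 ^ k / 2 < y := lt_of_le_of_lt (by nlinarith) h
        rw [if_pos this]
      have hgeom : ∑ k ∈ Finset.range (K+1), (lam * 2 ^ k / 2)
          = lam * (2 ^ (K+1) - 1) / 2 := by
        have h1 : ∑ k ∈ Finset.range (K+1), (lam * 2 ^ k / 2)
            = (∑ k ∈ Finset.range (K+1), (2:ℝ) ^ k) * (lam / 2) := by
          rw [Finset.sum_mul]; exact Finset.sum_congr rfl fun k _ => by ring
        rw [h1, geom_sum_eq (by norm_num : (2:ℝ) ≠ 1)]; ring
      rw [hgeom] at hsum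
      have h2 : (2:ℝ)^(K+1) = 2 * 2^K := by ring
      rw [h2] at hy hsum
      linarith

lemma sw_part1 (N : ℕ) (c : Fin N → ℝ) (g : Fin N → ℝ → ℝ)
    (hc : ∀ i, 0 ≤ c i) (hc1 : (∑ i, c i) = 1) (hg : ∀ i, weakL1 (g i) ≤ 1) :
    weakL1 (fun x => ∑ i, c i * g i x)
      ≤ ENNReal.ofReal (4 * (1 + ∑ i, c i * Real.log (1 / c i))) := by
  have hcle1 : ∀ i, c i ≤ 1 := fun i => by
    rw [← hc1]; exact Finset.single_le_sum (fun j _ => hc j) (Finset.mem_univ i)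
  have hlog : ∀ i, 0 ≤ Real.log (1 / c i) := by
    intro i
    rcases (hc i).eq_or_lt with h | h
    · simp [← h]
    · exact Real.log_nonneg (by rw [le_div_iff₀ h]; linarith [hcle1 i])
  have hA : ∀ (i : Fin N) (t : ℝ), 0 < t →
      ENNReal.ofReal t * volume {x | t < |g i x|} ≤ 1 := by
    intro i t ht
    refine le_trans ?_ (hg i)
    rw [weakL1]
    exact le_iSup₂_of_le t ht le_rfl
  rw [weakL1]
  refine iSup₂_le fun lam hlam => ?_
  set K : Fin N → ℕ := fun i => ⌊Real.logb 2 (1 / c i)⌋₊ + 1 with hKdef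
  set B : Fin N → ℕ → Set ℝ :=
    fun i k => toMeasurable volume {x | lam * 2 ^ k / 2 < |g i x|} with hBdef
  set E : Fin N → Set ℝ := fun i => {x | 0 < c i ∧ lam * 2 ^ (K i) / 2 < |g i x|} with hEdef
  set G : ℝ → ℝ≥0∞ := fun x => ∑ i, ∑ k ∈ Finset.range (K i),
      (B i k).indicator (fun _ => ENNReal.ofReal (c i * (lam * 2 ^ k / 2))) x with hGdef
  have hBmeas : ∀ i k, MeasurableSet (B i k) := fun i k => measurableSet_toMeasurable _ _
  -- arithmetic facts about K
  have h2K : ∀ i, 0 < c i → 1 / c i ≤ (2:ℝ) ^ (K i) := by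
    intro i hci
    have h1 : (0:ℝ) < 1 / c i := by positivity
    have h2 : Real.logb 2 (1 / c i) ≤ (K i : ℝ) := by
      rw [hKdef]; push_cast
      linarith [Nat.lt_floor_add_one (Real.logb 2 (1 / c i))]
    calc 1 / c i = 2 ^ Real.logb 2 (1 / c i) :=
          (Real.rpow_logb two_pos (by norm_num) h1).symm
      _ ≤ 2 ^ ((K i : ℝ)) := Real.rpow_le_rpow_of_exponent_le one_le_two h2
      _ = 2 ^ (K i) := by rw [Real.rpow_natCast]
  have hKle : ∀ i, c i * (K i : ℝ) ≤ c i * (2 * Real.log (1 / c i) + 1) := by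
    intro i
    rcases (hc i).eq_or_lt with h0 | hci
    · rw [← h0]; simp
    refine mul_le_mul_of_nonneg_left ?_ (hc i)
    have hl2 : (0.6931471803:ℝ) < Real.log 2 := Real.log_two_gt_d9
    have hlb : Real.logb 2 (1 / c i) = Real.log (1 / c i) / Real.log 2 := rfl
    have hnn : 0 ≤ Real.logb 2 (1 / c i) := by
      rw [hlb]; exact div_nonneg (hlog i) (by linarith)
    have hfl : ((⌊Real.logb 2 (1 / c i)⌋₊ : ℝ)) ≤ Real.logb 2 (1 / c i) := Nat.floor_le hnn
    have hdb : Real.logb 2 (1 / c i) ≤ 2 * Real.log (1 / c i) := by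
      rw [hlb, div_le_iff₀ (by linarith)]
      nlinarith [hlog i]
    rw [hKdef]; push_cast
    linarith
  -- measure of exceptional sets
  have hE : ∀ i, ENNReal.ofReal lam * volume (E i) ≤ ENNReal.ofReal (2 * c i) := by
    intro i
    by_cases hci : 0 < c i
    · have hm : volume (E i) ≤ volume {x | lam * 2 ^ (K i) / 2 < |g i x|} :=
        measure_mono (fun x hx => hx.2)
      have hkey := hA i (lam * 2 ^ (K i) / 2) (by positivity)
      have hfac : ENNReal.ofReal lam
          = ENNReal.ofReal (2 / 2 ^ (K i)) * ENNReal.ofReal (lam * 2 ^ (K i) / 2) := by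
        rw [← ENNReal.ofReal_mul (by positivity)]
        congr 1; field_simp
      calc ENNReal.ofReal lam * volume (E i)
          ≤ ENNReal.ofReal lam * volume {x | lam * 2 ^ (K i) / 2 < |g i x|} :=
            mul_le_mul_right hm _
        _ = ENNReal.ofReal (2 / 2 ^ (K i)) *
            (ENNReal.ofReal (lam * 2 ^ (K i) / 2) * volume {x | lam * 2 ^ (K i) / 2 < |g i x|}) := by
            rw [hfac, mul_assoc]
        _ ≤ ENNReal.ofReal (2 / 2 ^ (K i)) * 1 := mul_le_mul_right hkey _
        _ = ENNReal.ofReal (2 / 2 ^ (K i)) := mul_one _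
        _ ≤ ENNReal.ofReal (2 * c i) := by
            apply ENNReal.ofReal_le_ofReal
            have h2K' := h2K i hci
            have hp : (0:ℝ) < 2 ^ (K i) := by positivity
            rw [div_le_iff₀ hp]
            rw [div_le_iff₀ hci] at h2K'
            nlinarith
    · have hEe : E i = ∅ := by
        rw [hEdef]; ext x; simp [hci]
      simp [hEe]
  -- the inclusion
  have hsub : {x | lam < |∑ i, c i * g i x|}
      ⊆ (⋃ i, E i) ∪ {x | ENNReal.ofReal (lam / 2) ≤ G x} := by
    intro x hx
    by_cases hxE : x ∈ ⋃ i, E i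
    · exact Or.inl hxE
    right
    simp only [Set.mem_iUnion, not_exists] at hxE
    have h1 : lam < ∑ i, c i * |g i x| := by
      refine lt_of_lt_of_le hx ?_
      refine le_trans (Finset.abs_sum_le_sum_abs _ _) ?_
      exact le_of_eq (Finset.sum_congr rfl fun i _ => by rw [abs_mul, abs_of_nonneg (hc i)])
    set S : Fin N → ℝ := fun i => ∑ k ∈ Finset.range (K i),
      (B i k).indicator (fun _ => lam * 2 ^ k / 2) x with hSdef
    have hSnn : ∀ i, 0 ≤ S i := fun i => Finset.sum_nonneg fun k _ =>
      Set.indicator_nonneg (fun _ _ => by positivity) x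
    have h2 : ∀ i, c i * |g i x| ≤ c i * (lam / 2 + S i) := by
      intro i
      rcases (hc i).eq_or_lt with h0 | hci
      · rw [← h0]; simp only [zero_mul]; exact le_refl 0
      refine mul_le_mul_of_nonneg_left ?_ (hc i)
      have hcap : |g i x| ≤ lam * 2 ^ (K i) / 2 := by
        by_contra hcon; push_neg at hcon
        exact hxE i ⟨hci, hcon⟩
      have haux := sw_aux_pointwise lam |g i x| hlam (K i) hcap
      refine haux.trans (add_le_add_right ?_ _)
      refine Finset.sum_le_sum fun k _ => ?_
      by_cases hlt : lam * 2 ^ k / 2 < |g i x|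
      · rw [if_pos hlt]
        have hxB : x ∈ B i k := subset_toMeasurable _ _ hlt
        rw [Set.indicator_of_mem hxB]
      · rw [if_neg hlt]
        exact Set.indicator_nonneg (fun _ _ => by positivity) x
    have h3 : ∑ i, c i * (lam / 2 + S i) = lam / 2 + ∑ i, c i * S i := by
      simp only [mul_add]
      rw [Finset.sum_add_distrib, ← Finset.sum_mul, hc1, one_mul]
    have h4 : lam / 2 < ∑ i, c i * S i := by
      have := Finset.sum_le_sum (fun i (_ : i ∈ Finset.univ) => h2 i)
      rw [h3] at this
      linarith
    show ENNReal.ofReal (lam / 2) ≤ G x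
    have h5 : ENNReal.ofReal (∑ i, c i * S i) ≤ G x := by
      rw [ENNReal.ofReal_sum_of_nonneg (fun i _ => mul_nonneg (hc i) (hSnn i)), hGdef]
      refine Finset.sum_le_sum fun i _ => ?_
      rw [hSdef, Finset.mul_sum,
        ENNReal.ofReal_sum_of_nonneg (fun k _ => mul_nonneg (hc i)
          (Set.indicator_nonneg (fun _ _ => by positivity) x))]
      refine Finset.sum_le_sum fun k _ => ?_
      by_cases hxB : x ∈ B i k
      · rw [Set.indicator_of_mem hxB, Set.indicator_of_mem hxB]
      · rw [Set.indicator_of_notMem hxB, Set.indicator_of_notMem hxB, mul_zero,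
          ENNReal.ofReal_zero]
    exact le_trans (ENNReal.ofReal_le_ofReal h4.le) h5
  -- integral bound
  have hGmeas : Measurable G := by
    rw [hGdef]
    apply Finset.measurable_sum; intro i _
    apply Finset.measurable_sum; intro k _
    exact measurable_const.indicator (hBmeas i k)
  have hGint : ∫⁻ x, G x ≤ ENNReal.ofReal (∑ i, c i * (K i : ℝ)) := by
    have h1 : ∫⁻ x, G x = ∑ i, ∑ k ∈ Finset.range (K i),
        ENNReal.ofReal (c i * (lam * 2 ^ k / 2)) * volume (B i k) := by
      rw [hGdef]
      rw [lintegral_finset_sum _ (fun i _ => Finset.measurable_sum _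
        fun k _ => measurable_const.indicator (hBmeas i k))]
      refine Finset.sum_congr rfl fun i _ => ?_
      rw [lintegral_finset_sum _ (fun k _ => measurable_const.indicator (hBmeas i k))]
      refine Finset.sum_congr rfl fun k _ => ?_
      rw [lintegral_indicator (hBmeas i k), setLIntegral_const]
    rw [h1]
    have h2 : ∀ i k, ENNReal.ofReal (c i * (lam * 2 ^ k / 2)) * volume (B i k)
        ≤ ENNReal.ofReal (c i) := by
      intro i k
      have hvol : volume (B i k) = volume {x | lam * 2 ^ k / 2 < |g i x|} :=
        measure_toMeasurable _
      rw [hvol, ENNReal.ofReal_mul (hc i), mul_assoc]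
      calc ENNReal.ofReal (c i) * (ENNReal.ofReal (lam * 2 ^ k / 2) *
            volume {x | lam * 2 ^ k / 2 < |g i x|})
          ≤ ENNReal.ofReal (c i) * 1 := mul_le_mul_right (hA i _ (by positivity)) _
        _ = ENNReal.ofReal (c i) := mul_one _
    calc ∑ i, ∑ k ∈ Finset.range (K i),
          ENNReal.ofReal (c i * (lam * 2 ^ k / 2)) * volume (B i k)
        ≤ ∑ i, ∑ _k ∈ Finset.range (K i), ENNReal.ofReal (c i) :=
          Finset.sum_le_sum fun i _ => Finset.sum_le_sum fun k _ => h2 i k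
      _ = ∑ i, ENNReal.ofReal (c i * (K i : ℝ)) := by
          refine Finset.sum_congr rfl fun i _ => ?_
          rw [Finset.sum_const, Finset.card_range, nsmul_eq_mul,
            ENNReal.ofReal_mul (hc i), ← ENNReal.ofReal_natCast (K i)]
          ring
      _ = ENNReal.ofReal (∑ i, c i * (K i : ℝ)) :=
          (ENNReal.ofReal_sum_of_nonneg fun i _ =>
            mul_nonneg (hc i) (Nat.cast_nonneg _)).symm
  have hMarkov : ENNReal.ofReal (lam / 2) * volume {x | ENNReal.ofReal (lam / 2) ≤ G x}
      ≤ ∫⁻ x, G x :=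
    mul_meas_ge_le_lintegral₀ (μ := volume) hGmeas.aemeasurable (ENNReal.ofReal (lam / 2))
  -- assembly
  calc ENNReal.ofReal lam * volume {x | lam < |∑ i, c i * g i x|}
      ≤ ENNReal.ofReal lam *
        (volume (⋃ i, E i) + volume {x | ENNReal.ofReal (lam / 2) ≤ G x}) :=
        mul_le_mul_right ((measure_mono hsub).trans (measure_union_le _ _)) _
    _ = ENNReal.ofReal lam * volume (⋃ i, E i) +
        ENNReal.ofReal lam * volume {x | ENNReal.ofReal (lam / 2) ≤ G x} := mul_add _ _ _
    _ ≤ (∑ i, ENNReal.ofReal (2 * c i)) +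
        ENNReal.ofReal 2 * ENNReal.ofReal (∑ i, c i * (K i : ℝ)) := by
      gcongr ?_ + ?_
      · calc ENNReal.ofReal lam * volume (⋃ i, E i)
            ≤ ENNReal.ofReal lam * ∑ i, volume (E i) := by
              refine mul_le_mul_right ?_ _
              refine (measure_iUnion_le E).trans_eq ?_
              exact tsum_fintype _
          _ = ∑ i, ENNReal.ofReal lam * volume (E i) := Finset.mul_sum _ _ _
          _ ≤ ∑ i, ENNReal.ofReal (2 * c i) := Finset.sum_le_sum fun i _ => hE i
      · have hfac : ENNReal.ofReal lam = ENNReal.ofReal 2 * ENNReal.ofReal (lam / 2) := by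
          rw [← ENNReal.ofReal_mul (by norm_num)]; congr 1; ring
        rw [hfac, mul_assoc]
        exact mul_le_mul_right (hMarkov.trans hGint) _
    _ ≤ ENNReal.ofReal (2 + 2 * ∑ i, c i * (K i : ℝ)) := by
      have hs1 : (∑ i, ENNReal.ofReal (2 * c i)) = ENNReal.ofReal 2 := by
        rw [← ENNReal.ofReal_sum_of_nonneg (fun i _ => by linarith [hc i]),
          ← Finset.mul_sum, hc1, mul_one]
      have hnn2 : (0:ℝ) ≤ 2 * ∑ i, c i * (K i : ℝ) := by
        have : 0 ≤ ∑ i, c i * (K i : ℝ) :=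
          Finset.sum_nonneg fun i _ => mul_nonneg (hc i) (Nat.cast_nonneg _)
        linarith
      rw [hs1, ← ENNReal.ofReal_mul (by norm_num),
        ← ENNReal.ofReal_add (by norm_num) hnn2]
    _ ≤ ENNReal.ofReal (4 * (1 + ∑ i, c i * Real.log (1 / c i))) := by
      apply ENNReal.ofReal_le_ofReal
      have hsum : ∑ i, c i * (K i : ℝ) ≤ ∑ i, c i * (2 * Real.log (1 / c i) + 1) :=
        Finset.sum_le_sum fun i _ => hKle i
      have hexp : ∑ i, c i * (2 * Real.log (1 / c i) + 1)
          = 2 * (∑ i, c i * Real.log (1 / c i)) + 1 := by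
        simp only [mul_add, mul_one]
        rw [Finset.sum_add_distrib, hc1, Finset.mul_sum]
        congr 1
        exact Finset.sum_congr rfl fun i _ => by ring
      linarith

/-- Stein–Weiss inequality for convex combinations in weak `L¹`:
`‖∑ cᵢ gᵢ‖_{1,∞} ≤ C(1 + ∑ cᵢ log(1/cᵢ))` whenever `‖gᵢ‖_{1,∞} ≤ 1`, `cᵢ ≥ 0`, `∑ cᵢ = 1`;
in particular, for `cᵢ = 1/N` the bound is `C(1 + log N)`. -/
theorem stein_weiss_weak_L1 :
    ∃ C : ℝ, 0 < C ∧
      ((∀ (N : ℕ) (c : Fin N → ℝ) (g : Fin N → ℝ → ℝ),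
        (∀ i, 0 ≤ c i) → (∑ i, c i) = 1 → (∀ i, weakL1 (g i) ≤ 1) →
        weakL1 (fun x => ∑ i, c i * g i x)
          ≤ ENNReal.ofReal (C * (1 + ∑ i, c i * Real.log (1 / c i))))
      ∧ ∀ (N : ℕ) (g : Fin N → ℝ → ℝ), 0 < N → (∀ i, weakL1 (g i) ≤ 1) →
        weakL1 (fun x => (1 / (N : ℝ)) * ∑ i, g i x)
          ≤ ENNReal.ofReal (C * (1 + Real.log N))) := by
  refine ⟨4, by norm_num, sw_part1, ?_⟩
  intro N g hN hg
  have hN0 : (N:ℝ) ≠ 0 := Nat.cast_ne_zero.mpr hN.ne'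
  have hfun : (fun x => (1 / (N : ℝ)) * ∑ i, g i x)
      = fun x => ∑ i, (fun _ : Fin N => 1/(N:ℝ)) i * g i x := by
    funext x; rw [Finset.mul_sum]
  have h1 : (∑ _i : Fin N, 1/(N:ℝ)) = 1 := by
    rw [Finset.sum_const, Finset.card_univ, Fintype.card_fin, nsmul_eq_mul]
    field_simp
  have key := sw_part1 N (fun _ => 1/(N:ℝ)) g
    (fun _ => by positivity) h1 hg
  rw [hfun]
  refine key.trans (le_of_eq ?_)
  congr 1
  have h2 : (∑ _i : Fin N, (1/(N:ℝ)) * Real.log (1 / (1/(N:ℝ)))) = Real.log N := by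
    rw [one_div_one_div, Finset.sum_const, Finset.card_univ, Fintype.card_fin, nsmul_eq_mul]
    field_simp
  rw [h2]
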